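/- arXiv:1010.1049 — 3 statements merged into one kernel-verified Lean document; each statement's English description precedes it below -/
import Mathlib

section
/- Let μ₁, μ₂ ∈ ℝ and σ₁², σ₂² > 0. Then 2 - 2·exp(-(μ₁-μ₂)²/(4(σ₁²+σ₂²)))·√(2√(σ₁²σ₂²)/(σ₁²+σ₂²)) ≤ 2(log(σ₁²/σ₂²))² + (μ₁-μ₂)²/(2(σ₁²+σ₂²)). -/
set_option maxHeartbeats 1000000

private lemma key_log_ineq (u : ℝ) (hu : 0 < u) :
    (u - 1) ^ 2 ≤ 4 * (Real.log u) ^ 2 * (u ^ 2 + 1) := by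
  rcases le_or_gt 1 u with h | h
  · have h1 : (u - 1) / u ≤ Real.log u := by
      have hinv : Real.log u⁻¹ ≤ u⁻¹ - 1 := Real.log_le_sub_one_of_pos (by positivity)
      rw [Real.log_inv] at hinv
      rw [div_le_iff₀ hu]
      have := mul_le_mul_of_nonneg_right (by linarith : 1 - u⁻¹ ≤ Real.log u) hu.le
      calc u - 1 = (1 - u⁻¹) * u := by field_simp
        _ ≤ Real.log u * u := this
    have hlog0 : 0 ≤ Real.log u := Real.log_nonneg h
    have h2 : u - 1 ≤ Real.log u * u := by
      rw [div_le_iff₀ hu] at h1; linarith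
    nlinarith [sq_nonneg (Real.log u * u), sq_nonneg (u - 1), sq_nonneg (Real.log u),
      mul_le_mul h2 h2 (by linarith) (by positivity)]
  · have h1 : Real.log u ≤ u - 1 := Real.log_le_sub_one_of_pos hu
    have h2 : Real.log u < 0 := Real.log_neg hu h
    nlinarith [mul_nonneg (by linarith : (0:ℝ) ≤ (u - 1) - Real.log u)
        (by linarith : (0:ℝ) ≤ -(Real.log u) - (u - 1)),
      mul_nonneg (sq_nonneg (Real.log u)) (sq_nonneg u), sq_nonneg (Real.log u)]

theorem hellinger_normal_bound (μ₁ μ₂ σ₁sq σ₂sq : ℝ) (h₁ : 0 < σ₁sq) (h₂ : 0 < σ₂sq) :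
    2 - 2 * Real.exp (-(μ₁ - μ₂) ^ 2 / (4 * (σ₁sq + σ₂sq)))
          * Real.sqrt (2 * Real.sqrt (σ₁sq * σ₂sq) / (σ₁sq + σ₂sq))
      ≤ 2 * (Real.log (σ₁sq / σ₂sq)) ^ 2 + (μ₁ - μ₂) ^ 2 / (2 * (σ₁sq + σ₂sq)) := by
  have hs : 0 < σ₁sq + σ₂sq := by linarith
  set t := (μ₁ - μ₂) ^ 2 / (4 * (σ₁sq + σ₂sq)) with ht
  have ht0 : 0 ≤ t := by positivity
  set S := Real.sqrt (2 * Real.sqrt (σ₁sq * σ₂sq) / (σ₁sq + σ₂sq)) with hS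
  have hS0 : 0 ≤ S := Real.sqrt_nonneg _
  have hargnn : 0 ≤ 2 * Real.sqrt (σ₁sq * σ₂sq) / (σ₁sq + σ₂sq) := by positivity
  have hSsq : S ^ 2 = 2 * Real.sqrt (σ₁sq * σ₂sq) / (σ₁sq + σ₂sq) := Real.sq_sqrt hargnn
  set x := Real.sqrt σ₁sq with hxdef
  set y := Real.sqrt σ₂sq with hydef
  have hx : 0 < x := Real.sqrt_pos.mpr h₁
  have hy : 0 < y := Real.sqrt_pos.mpr h₂
  have hxa : x ^ 2 = σ₁sq := Real.sq_sqrt h₁.le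
  have hyb : y ^ 2 = σ₂sq := Real.sq_sqrt h₂.le
  have hab : Real.sqrt (σ₁sq * σ₂sq) = x * y := by
    rw [hxdef, hydef, ← Real.sqrt_mul h₁.le]
  have hS1 : S ≤ 1 := by
    rw [hS, show (1:ℝ) = Real.sqrt 1 by simp]
    apply Real.sqrt_le_sqrt
    rw [div_le_one hs, hab]
    nlinarith [sq_nonneg (x - y)]
  have hexp : 1 - t ≤ Real.exp (-t) := by
    have := Real.add_one_le_exp (-t); linarith
  have harg : -(μ₁ - μ₂) ^ 2 / (4 * (σ₁sq + σ₂sq)) = -t := by rw [ht]; ring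
  have hL : Real.log (σ₁sq / σ₂sq) = 2 * Real.log (x / y) := by
    rw [← hxa, ← hyb, ← div_pow, Real.log_pow]
    push_cast; ring
  -- key: 1 - S ≤ L^2
  have hkey : 1 - S ≤ (Real.log (σ₁sq / σ₂sq)) ^ 2 := by
    have hk := key_log_ineq (x / y) (by positivity)
    have h3 : y ^ 2 * ((x / y - 1) ^ 2) ≤
        y ^ 2 * (4 * (Real.log (x / y)) ^ 2 * ((x / y) ^ 2 + 1)) :=
      mul_le_mul_of_nonneg_left hk (sq_nonneg y)
    have e1 : y ^ 2 * ((x / y - 1) ^ 2) = (x - y) ^ 2 := by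
      field_simp
    have e2 : y ^ 2 * (4 * (Real.log (x / y)) ^ 2 * ((x / y) ^ 2 + 1))
        = 4 * (Real.log (x / y)) ^ 2 * (x ^ 2 + y ^ 2) := by
      field_simp
    have h2 : (x - y) ^ 2 ≤ 4 * (Real.log (x / y)) ^ 2 * (x ^ 2 + y ^ 2) := by
      rw [e1, e2] at h3; exact h3
    have hxy2 : 0 < x ^ 2 + y ^ 2 := by positivity
    have hSsq' : 1 - S ^ 2 = (x - y) ^ 2 / (x ^ 2 + y ^ 2) := by
      rw [hSsq, hab, ← hxa, ← hyb]
      field_simp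
      ring
    have h4 : 1 - S ≤ 1 - S ^ 2 := by nlinarith
    have h5 : (x - y) ^ 2 / (x ^ 2 + y ^ 2) ≤ 4 * (Real.log (x / y)) ^ 2 := by
      rw [div_le_iff₀ hxy2]; linarith
    rw [hL]
    calc 1 - S ≤ (x - y) ^ 2 / (x ^ 2 + y ^ 2) := by rw [← hSsq']; exact h4
      _ ≤ 4 * (Real.log (x / y)) ^ 2 := h5
      _ = (2 * Real.log (x / y)) ^ 2 := by ring
  have ht2 : (μ₁ - μ₂) ^ 2 / (2 * (σ₁sq + σ₂sq)) = 2 * t := by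
    rw [ht]; field_simp; ring
  rw [harg, ht2]
  nlinarith [mul_nonneg (by linarith : (0:ℝ) ≤ Real.exp (-t) - (1 - t)) hS0,
    mul_nonneg ht0 (by linarith : (0:ℝ) ≤ 1 - S), hkey]
end

section
/- Let μ₁, μ₂ ∈ ℝ and σ₁² = e^{f₁}, σ₂² = e^{f₂} with |f₁| ≤ N and |f₂| ≤ N. Then (1/2) log(σ₂²/σ₁²) - (1/2)(1 - σ₁²/σ₂²) + (1/2)(μ₁-μ₂)²/σ₂² ≤ (1 + e^{2N})((μ₁-μ₂)² + (f₁-f₂)²). -/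
lemma aux_cosh (s : ℝ) (hs : 0 ≤ s) :
    Real.exp s + Real.exp (-s) - 2 ≤ s ^ 2 * Real.exp s := by
  have h1 := Real.add_one_le_exp (-s)
  have h2 : Real.exp s * Real.exp (-s) = 1 := by rw [← Real.exp_add]; simp
  have hp := Real.exp_pos s
  have hq := Real.exp_pos (-s)
  have h3 : Real.exp s - 1 ≤ s * Real.exp s := by nlinarith
  have h4 : 0 ≤ Real.exp s - 1 := by nlinarith [Real.add_one_le_exp s]
  nlinarith [sq_nonneg (Real.exp s - 1), mul_pos hp hq]

lemma aux_exp (t : ℝ) : Real.exp t - 1 - t ≤ t ^ 2 * Real.exp |t| := by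
  have h1 := Real.add_one_le_exp (-t)
  have h2 : Real.exp t + Real.exp (-t) - 2 ≤ |t| ^ 2 * Real.exp |t| := by
    rcases abs_cases t with ⟨h, ht⟩ | ⟨h, ht⟩
    · rw [h]; exact aux_cosh t ht
    · rw [h]
      have := aux_cosh (-t) (by linarith)
      simpa [neg_neg, add_comm] using this
  have h3 : |t| ^ 2 = t ^ 2 := sq_abs t
  linarith [h3 ▸ h2]

theorem kl_normal_bound (N μ₁ μ₂ f₁ f₂ : ℝ) (hf₁ : |f₁| ≤ N) (hf₂ : |f₂| ≤ N) :
    (1 / 2) * Real.log (Real.exp f₂ / Real.exp f₁)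
        - (1 / 2) * (1 - Real.exp f₁ / Real.exp f₂)
        + (1 / 2) * (μ₁ - μ₂) ^ 2 / Real.exp f₂
      ≤ (1 + Real.exp (2 * N)) * ((μ₁ - μ₂) ^ 2 + (f₁ - f₂) ^ 2) := by
  obtain ⟨t, ht⟩ : ∃ t, t = f₁ - f₂ := ⟨_, rfl⟩
  rw [show (f₁ - f₂) ^ 2 = t ^ 2 by rw [ht]]
  have habs : |t| ≤ 2 * N := by
    calc |t| ≤ |f₁| + |f₂| := ht ▸ abs_sub f₁ f₂
    _ ≤ 2 * N := by linarith
  have key : Real.exp t - 1 - t ≤ t ^ 2 * Real.exp (2 * N) := by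
    have := aux_exp t
    have h := Real.exp_le_exp.mpr habs
    nlinarith [sq_nonneg t]
  have hN : -N ≤ f₂ := (abs_le.mp hf₂).1
  have hmono : Real.exp (-N) ≤ Real.exp f₂ := Real.exp_le_exp.mpr hN
  have hm : (μ₁ - μ₂) ^ 2 / Real.exp f₂ ≤ (μ₁ - μ₂) ^ 2 * Real.exp N := by
    rw [div_le_iff₀ (Real.exp_pos f₂)]
    have h1 : Real.exp N * Real.exp (-N) = 1 := by rw [← Real.exp_add]; simp
    have h2 : 1 ≤ Real.exp N * Real.exp f₂ := by nlinarith [Real.exp_pos N]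
    nlinarith [mul_le_mul_of_nonneg_left h2 (sq_nonneg (μ₁ - μ₂))]
  have hlog : Real.log (Real.exp f₂ / Real.exp f₁) = -t := by
    rw [Real.log_div (Real.exp_ne_zero _) (Real.exp_ne_zero _), Real.log_exp,
      Real.log_exp, ht]; ring
  have hdiv : Real.exp f₁ / Real.exp f₂ = Real.exp t := by
    rw [← Real.exp_sub, ht]
  have heN : Real.exp N ≤ 1 + Real.exp (2 * N) := by
    have h2 : Real.exp (2 * N) = Real.exp N * Real.exp N := by
      rw [← Real.exp_add]; ring_nf
    nlinarith [sq_nonneg (Real.exp N - 1)]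
  rw [hlog, hdiv]
  have hm2 : 1 / 2 * (μ₁ - μ₂) ^ 2 / Real.exp f₂ ≤ 1 / 2 * ((μ₁ - μ₂) ^ 2 * Real.exp N) := by
    rw [mul_div_assoc]; linarith
  have hmt := sq_nonneg (μ₁ - μ₂)
  have htt := sq_nonneg t
  have hep := Real.exp_pos (2 * N)
  nlinarith [hm2, mul_nonneg htt hep.le, mul_nonneg hmt (Real.exp_pos N).le,
    mul_nonneg hmt hep.le,
    mul_nonneg htt (by linarith : (0:ℝ) ≤ 1 + Real.exp (2*N)),
    mul_nonneg hmt (by linarith [heN] : (0:ℝ) ≤ 1 + Real.exp (2*N) - Real.exp N)]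
end

section
/- Let μ₁, μ₂ ∈ ℝ and σ₁² = e^{f₁}, σ₂² = e^{f₂} with |f₁| ≤ N and |f₂| ≤ N, where N ≥ 0. Then 2·(-1/2 + σ₁²/(2σ₂²))² + (σ₁²/σ₂² · (μ₁-μ₂))² ≤ e^{4N}·((f₁-f₂)² + C·(μ₁-μ₂)²) for C = e^{4N}. -/
theorem var_normal_bound (N μ₁ μ₂ f₁ f₂ : ℝ) (hN : 0 ≤ N) (hf₁ : |f₁| ≤ N) (hf₂ : |f₂| ≤ N) :
    2 * (-(1 / 2) + Real.exp f₁ / (2 * Real.exp f₂)) ^ 2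
        + (Real.exp f₁ / Real.exp f₂ * (μ₁ - μ₂)) ^ 2
      ≤ Real.exp (4 * N) * ((f₁ - f₂) ^ 2 + Real.exp (4 * N) * (μ₁ - μ₂) ^ 2) := by
  have key : ∀ s : ℝ, |Real.exp s - 1| ≤ |s| * Real.exp |s| := by
    intro s
    rcases le_or_gt 0 s with h | h
    · rw [abs_of_nonneg (sub_nonneg.2 (Real.one_le_exp h)), abs_of_nonneg h]
      have h1 := Real.add_one_le_exp (-s)
      have h2 : Real.exp (-s) * Real.exp s = 1 := by
        rw [← Real.exp_add]; simp
      nlinarith [Real.exp_pos s]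
    · rw [abs_of_neg h,
        abs_of_nonpos (sub_nonpos.2 (Real.exp_le_one_iff.2 h.le))]
      have h1 := Real.add_one_le_exp s
      have h2 : (1:ℝ) ≤ Real.exp (-s) := Real.one_le_exp (by linarith)
      nlinarith
  set t := f₁ - f₂ with ht
  obtain ⟨ha, hb⟩ := abs_le.mp hf₁
  obtain ⟨hc, hd⟩ := abs_le.mp hf₂
  have htN : |t| ≤ 2 * N := by
    rw [abs_le]; constructor <;> simp [ht] <;> linarith
  have hdiv : Real.exp f₁ / Real.exp f₂ = Real.exp t := by
    rw [ht, ← Real.exp_sub]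
  clear_value t
  have hdiv2 : Real.exp f₁ / (2 * Real.exp f₂) = Real.exp t / 2 := by
    rw [← hdiv]; field_simp
  rw [hdiv, hdiv2]
  have hk := key t
  have he : Real.exp |t| ≤ Real.exp (2 * N) := Real.exp_le_exp.2 htN
  have habs0 : 0 ≤ |t| * Real.exp |t| := by positivity
  have hsq : (Real.exp t - 1) ^ 2 ≤ (|t| * Real.exp (2 * N)) ^ 2 := by
    have h1 : |Real.exp t - 1| ≤ |t| * Real.exp (2 * N) := by
      refine hk.trans ?_
      exact mul_le_mul_of_nonneg_left he (abs_nonneg t)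
    calc (Real.exp t - 1) ^ 2 = |Real.exp t - 1| ^ 2 := (sq_abs _).symm
      _ ≤ (|t| * Real.exp (2 * N)) ^ 2 := by
          exact pow_le_pow_left₀ (abs_nonneg _) h1 2
  have hexp4 : Real.exp (2 * N) * Real.exp (2 * N) = Real.exp (4 * N) := by
    rw [← Real.exp_add]; ring_nf
  have hsq' : (Real.exp t - 1) ^ 2 ≤ t ^ 2 * Real.exp (4 * N) := by
    calc (Real.exp t - 1) ^ 2 ≤ (|t| * Real.exp (2 * N)) ^ 2 := hsq
      _ = t ^ 2 * (Real.exp (2 * N) * Real.exp (2 * N)) := by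
          rw [mul_pow, sq_abs]; ring
      _ = t ^ 2 * Real.exp (4 * N) := by rw [hexp4]
  have ht2 : t ≤ 2 * N := (abs_le.mp htN).2
  have hexpt : Real.exp t ^ 2 ≤ Real.exp (4 * N) := by
    calc Real.exp t ^ 2 = Real.exp (t + t) := by rw [Real.exp_add]; ring
      _ ≤ Real.exp (4 * N) := Real.exp_le_exp.2 (by linarith)
  have hone : (1:ℝ) ≤ Real.exp (4 * N) := Real.one_le_exp (by linarith)
  have heq : 2 * (-(1 / 2) + Real.exp t / 2) ^ 2 = (Real.exp t - 1) ^ 2 / 2 := by ring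
  have heq2 : (Real.exp t * (μ₁ - μ₂)) ^ 2 = Real.exp t ^ 2 * (μ₁ - μ₂) ^ 2 := by ring
  rw [heq, heq2]
  have h4 : Real.exp t ^ 2 * (μ₁ - μ₂) ^ 2 ≤ Real.exp (4 * N) * (μ₁ - μ₂) ^ 2 :=
    mul_le_mul_of_nonneg_right hexpt (sq_nonneg _)
  have h5 : Real.exp (4 * N) * (μ₁ - μ₂) ^ 2 ≤
      Real.exp (4 * N) * (Real.exp (4 * N) * (μ₁ - μ₂) ^ 2) := by
    nlinarith [mul_nonneg (Real.exp_pos (4 * N)).le (sq_nonneg (μ₁ - μ₂))]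
  have h6 : (Real.exp t - 1) ^ 2 / 2 ≤ Real.exp (4 * N) * t ^ 2 := by
    nlinarith [mul_nonneg (sq_nonneg t) (Real.exp_pos (4 * N)).le]
  rw [mul_add]
  linarith
end
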